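/- The Baxter number B(n) = (1/C(n+1,1)) · (1/C(n+1,2)) · Σ_{k=1}^{n} C(n+1,k−1)·C(n+1,k)·C(n+1,k+1) is a positive integer for every n ≥ 1, and B(1) = 1, B(2) = 2, B(3) = 6, B(4) = 22. -/

import Mathlib

open Nat


lemma fact_mul_apply (p a b : ℕ) (ha : a ≠ 0) (hb : b ≠ 0) :
    (a * b).factorization p = a.factorization p + b.factorization p := by
  rw [Nat.factorization_mul ha hb]; rfl

lemma val1 (p m j : ℕ) (hjm : j ≤ m) :
    ((m+1).choose (j+1)).factorization p + (j+1).factorization p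
      = (m+1).factorization p + (m.choose j).factorization p := by
  have h : (m+1) * m.choose j = (m+1).choose (j+1) * (j+1) := Nat.add_one_mul_choose_eq m j
  have h1 : m.choose j ≠ 0 := (Nat.choose_pos hjm).ne'
  have h2 : (m+1).choose (j+1) ≠ 0 := (Nat.choose_pos (by omega)).ne'
  have e1 := fact_mul_apply p (m+1) (m.choose j) (by omega) h1
  have e2 := fact_mul_apply p ((m+1).choose (j+1)) (j+1) h2 (by omega)
  rw [h] at e1
  omega

lemma V1 (p m j : ℕ) (h1 : 1 ≤ j) (h2 : j ≤ m) :
    m.factorization p ≤ (m.choose j).factorization p + j.factorization p := by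
  obtain ⟨j, rfl⟩ : ∃ j', j = j' + 1 := ⟨j - 1, by omega⟩
  obtain ⟨m, rfl⟩ : ∃ m', m = m' + 1 := ⟨m - 1, by omega⟩
  have := val1 p m j (by omega)
  omega

lemma V2 (p m j : ℕ) (h1 : 2 ≤ j) (h2 : j ≤ m) :
    m.factorization p + (m-1).factorization p
      ≤ (m.choose j).factorization p + j.factorization p + (j-1).factorization p := by
  obtain ⟨j, rfl⟩ : ∃ j', j = j' + 2 := ⟨j - 2, by omega⟩
  obtain ⟨m, rfl⟩ : ∃ m', m = m' + 2 := ⟨m - 2, by omega⟩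
  have hA := val1 p (m+1) (j+1) (by omega)
  simp only [show m+1+1 = m+2 from rfl, show j+1+1 = j+2 from rfl] at hA
  have hB := val1 p m j (by omega)
  simp only [show m + 2 - 1 = m + 1 from rfl, show j + 2 - 1 = j + 1 from rfl]
  omega

lemma v2_le_one (n : ℕ) (h : ¬ (4 ∣ n)) : n.factorization 2 ≤ 1 := by
  by_contra hc
  push_neg at hc
  have hn : n ≠ 0 := by rintro rfl; exact h ⟨0, rfl⟩
  have : (2:ℕ)^2 ∣ n :=
    (Nat.Prime.pow_dvd_iff_le_factorization Nat.prime_two hn).mpr hc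
  exact h (by simpa using this)

lemma vzero (p n : ℕ) (h : ¬ p ∣ n) : n.factorization p = 0 :=
  Nat.factorization_eq_zero_of_not_dvd h

lemma mainp (p m k : ℕ) (hp : p.Prime) (hk : 2 ≤ k) (hkm : k + 2 ≤ m) :
    m.factorization p + (m.choose 2).factorization p ≤
      (m.choose (k-1)).factorization p + (m.choose k).factorization p
        + (m.choose (k+1)).factorization p := by
  -- basic identity: m * (m-1) = m.choose 2 * 2
  have hid : m * (m - 1) = m.choose 2 * 2 := by
    obtain ⟨m', rfl⟩ : ∃ m', m = m' + 1 := ⟨m - 1, by omega⟩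
    have := Nat.add_one_mul_choose_eq m' 1
    simpa [Nat.choose_one_right] using this
  have hc2 : m.factorization p + (m-1).factorization p
      = (m.choose 2).factorization p + (2:ℕ).factorization p := by
    have e1 := fact_mul_apply p m (m-1) (by omega) (by omega)
    have e2 := fact_mul_apply p (m.choose 2) 2 (Nat.choose_pos (by omega)).ne' (by omega)
    rw [hid] at e1; omega
  by_cases hp2 : p = 2
  · subst hp2
    have hv2 : (2:ℕ).factorization 2 = 1 := Nat.Prime.factorization_self Nat.prime_two
    by_cases hm2 : 2 ∣ m
    · -- m even: (m-1) odd
      have hb : (m-1).factorization 2 = 0 := vzero 2 _ (by omega)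
      by_cases hke : 2 ∣ k
      · have h1 := V1 2 m (k-1) (by omega) (by omega)
        have h3 := V1 2 m (k+1) (by omega) (by omega)
        have z1 : (k-1).factorization 2 = 0 := vzero 2 _ (by omega)
        have z3 : (k+1).factorization 2 = 0 := vzero 2 _ (by omega)
        omega
      · have h2 := V1 2 m k (by omega) (by omega)
        have z2 : k.factorization 2 = 0 := vzero 2 _ hke
        rcases (by omega : k % 4 = 1 ∨ k % 4 = 3) with h4 | h4
        · have h3 := V1 2 m (k+1) (by omega) (by omega)
          have z3 : (k+1).factorization 2 ≤ 1 := v2_le_one _ (by omega)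
          omega
        · have h1 := V1 2 m (k-1) (by omega) (by omega)
          have z1 : (k-1).factorization 2 ≤ 1 := v2_le_one _ (by omega)
          omega
    · -- m odd
      have ha : m.factorization 2 = 0 := vzero 2 _ hm2
      rcases (by omega : k % 4 = 0 ∨ k % 4 = 1 ∨ k % 4 = 2 ∨ k % 4 = 3) with h4|h4|h4|h4
      · have h1 := V2 2 m (k-1) (by omega) (by omega)
        have z1 : (k-1).factorization 2 = 0 := vzero 2 _ (by omega)
        have z2 : (k-1-1).factorization 2 ≤ 1 := v2_le_one _ (by omega)
        omega
      · have h3 := V2 2 m (k+1) (by omega) (by omega)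
        have z1 : (k+1-1).factorization 2 = 0 := vzero 2 _ (by omega)
        have z2 : (k+1).factorization 2 ≤ 1 := v2_le_one _ (by omega)
        omega
      · have h2 := V2 2 m k (by omega) (by omega)
        have z1 : (k-1).factorization 2 = 0 := vzero 2 _ (by omega)
        have z2 : k.factorization 2 ≤ 1 := v2_le_one _ (by omega)
        omega
      · have h2 := V2 2 m k (by omega) (by omega)
        have z1 : k.factorization 2 = 0 := vzero 2 _ (by omega)
        have z2 : (k-1).factorization 2 ≤ 1 := v2_le_one _ (by omega)
        omega
  · -- p odd
    have hv2 : (2:ℕ).factorization p = 0 :=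
      vzero p 2 (fun h => hp2 ((Nat.prime_dvd_prime_iff_eq hp Nat.prime_two).mp h))
    have hp3 : 3 ≤ p := by
      rcases hp.two_le.lt_or_eq with h | h
      · omega
      · exact absurd h.symm hp2
    by_cases hdk : p ∣ k
    · have hk3 : 3 ≤ k := by
        rcases Nat.le_of_dvd (by omega) hdk with h
        omega
      have hnd1 : ¬ p ∣ (k-1) := by
        intro h; have := Nat.dvd_sub hdk h
        rw [show k - (k-1) = 1 by omega] at this
        exact absurd (Nat.le_of_dvd one_pos this) (by omega)
      have hnd2 : ¬ p ∣ (k-2) := by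
        intro h; have := Nat.dvd_sub hdk h
        rw [show k - (k-2) = 2 by omega] at this
        exact absurd (Nat.le_of_dvd two_pos this) (by omega)
      have hnd3 : ¬ p ∣ (k+1) := by
        intro h; have := Nat.dvd_sub h hdk
        rw [show k + 1 - k = 1 by omega] at this
        exact absurd (Nat.le_of_dvd one_pos this) (by omega)
      have h1 := V2 p m (k-1) (by omega) (by omega)
      have h3 := V1 p m (k+1) (by omega) (by omega)
      have z1 : (k-1).factorization p = 0 := vzero p _ hnd1
      have z2 : (k-1-1).factorization p = 0 := by
        rw [show k-1-1 = k-2 by omega]; exact vzero p _ hnd2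
      have z3 : (k+1).factorization p = 0 := vzero p _ hnd3
      omega
    · by_cases hdk1 : p ∣ (k-1)
      · have hndk1 : ¬ p ∣ (k+1) := by
          intro h
          have := Nat.dvd_sub h hdk1
          rw [show k + 1 - (k-1) = 2 by omega] at this
          exact absurd (Nat.le_of_dvd two_pos this) (by omega)
        have h3 := V2 p m (k+1) (by omega) (by omega)
        have h2 := V1 p m k (by omega) (by omega)
        have z1 : (k+1).factorization p = 0 := vzero p _ hndk1
        have z2 : (k+1-1).factorization p = 0 := by
          rw [show k+1-1 = k from rfl]; exact vzero p _ hdk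
        have z3 : k.factorization p = 0 := vzero p _ hdk
        omega
      · have h2 := V2 p m k (by omega) (by omega)
        have h1 := V1 p m (k-1) (by omega) (by omega)
        have z1 : k.factorization p = 0 := vzero p _ hdk
        have z2 : (k-1).factorization p = 0 := vzero p _ hdk1
        omega

lemma key_dvd (m k : ℕ) (hm : 2 ≤ m) (h1 : 1 ≤ k) (h2 : k + 1 ≤ m) :
    m.choose 1 * m.choose 2 ∣ m.choose (k-1) * m.choose k * m.choose (k+1) := by
  rcases eq_or_lt_of_le h1 with rfl | hk2
  · simpa [Nat.choose_one_right] using Dvd.intro 1 rfl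
  rcases eq_or_lt_of_le h2 with he | hlt
  · -- k = m - 1
    have hk1 : k - 1 = m - 2 := by omega
    have hsym1 : m.choose (k-1) = m.choose 2 := by
      rw [hk1, Nat.choose_symm (by omega)]
    have hsym2 : m.choose k = m.choose 1 := by
      have : k = m - 1 := by omega
      rw [this, Nat.choose_symm (by omega)]
    have hsym3 : m.choose (k+1) = 1 := by
      rw [show k + 1 = m by omega, Nat.choose_self]
    rw [hsym1, hsym2, hsym3]
    exact ⟨1, by ring⟩
  · -- 2 ≤ k ≤ m - 2
    have hknum : 2 ≤ k := hk2
    have hkm : k + 2 ≤ m := hlt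
    have hd : m.choose 1 * m.choose 2 ≠ 0 := by
      have := Nat.choose_pos (show 1 ≤ m by omega)
      have := Nat.choose_pos (show 2 ≤ m by omega)
      positivity
    have hP : m.choose (k-1) * m.choose k * m.choose (k+1) ≠ 0 := by
      have := Nat.choose_pos (show k - 1 ≤ m by omega)
      have := Nat.choose_pos (show k ≤ m by omega)
      have := Nat.choose_pos (show k + 1 ≤ m by omega)
      positivity
    rw [← Nat.factorization_le_iff_dvd hd hP, Finsupp.le_def]
    intro p
    by_cases hp : p.Prime
    · have c1 : m.choose 1 ≠ 0 := by simpa using (Nat.choose_pos (show 1 ≤ m by omega)).ne'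
      have c2 : m.choose 2 ≠ 0 := (Nat.choose_pos (show 2 ≤ m by omega)).ne'
      have ck1 : m.choose (k-1) ≠ 0 := (Nat.choose_pos (show k-1 ≤ m by omega)).ne'
      have ck : m.choose k ≠ 0 := (Nat.choose_pos (show k ≤ m by omega)).ne'
      have ck2 : m.choose (k+1) ≠ 0 := (Nat.choose_pos (show k+1 ≤ m by omega)).ne'
      rw [fact_mul_apply p _ _ c1 c2, fact_mul_apply p _ _ (by positivity) ck2,
        fact_mul_apply p _ _ ck1 ck]
      have := mainp p m k hp hknum hkm
      rw [Nat.choose_one_right]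
      omega
    · rw [Nat.factorization_eq_zero_of_not_prime _ hp,
        Nat.factorization_eq_zero_of_not_prime _ hp]



/-- The numerator sum in the definition of the Baxter numbers. -/
def baxterSum (n : ℕ) : ℕ :=
  ∑ k ∈ Finset.Icc 1 n,
    Nat.choose (n + 1) (k - 1) * Nat.choose (n + 1) k * Nat.choose (n + 1) (k + 1)

/-- The Baxter number `B(n) = baxterSum n / (C(n+1,1) * C(n+1,2))` is always a
positive integer, and `B(1) = 1`, `B(2) = 2`, `B(3) = 6`, `B(4) = 22`. -/
theorem baxter_number_integer_and_values :
    (∀ n : ℕ, 1 ≤ n →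
      ∃ b : ℕ, 0 < b ∧
        Nat.choose (n + 1) 1 * Nat.choose (n + 1) 2 * b = baxterSum n) ∧
    Nat.choose 2 1 * Nat.choose 2 2 * 1 = baxterSum 1 ∧
    Nat.choose 3 1 * Nat.choose 3 2 * 2 = baxterSum 2 ∧
    Nat.choose 4 1 * Nat.choose 4 2 * 6 = baxterSum 3 ∧
    Nat.choose 5 1 * Nat.choose 5 2 * 22 = baxterSum 4 := by
  refine ⟨?_, by decide, by decide, by decide, by decide⟩
  intro n hn
  have hdvd : (n+1).choose 1 * (n+1).choose 2 ∣ baxterSum n := by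
    apply Finset.dvd_sum
    intro k hk
    rw [Finset.mem_Icc] at hk
    exact key_dvd (n+1) k (by omega) hk.1 (by omega)
  obtain ⟨b, hb⟩ := hdvd
  refine ⟨b, ?_, hb.symm⟩
  have hpos : 0 < baxterSum n := by
    have h1 : 1 ∈ Finset.Icc 1 n := by simp [hn]
    have hle := Finset.single_le_sum
      (f := fun k => Nat.choose (n + 1) (k - 1) * Nat.choose (n + 1) k * Nat.choose (n + 1) (k + 1))
      (fun i _ => Nat.zero_le _) h1
    have ht : 0 < Nat.choose (n + 1) 0 * Nat.choose (n + 1) 1 * Nat.choose (n + 1) 2 := by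
      have := Nat.choose_pos (show 1 ≤ n + 1 by omega)
      have := Nat.choose_pos (show 2 ≤ n + 1 by omega)
      simpa using by positivity
    calc 0 < _ := ht
    _ ≤ baxterSum n := by simpa [baxterSum] using hle
  rcases Nat.eq_zero_or_pos b with rfl | h
  · rw [hb] at hpos; simp at hpos
  · exact h
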